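/- Let k be an algebraically closed field of characteristic 2 and let n ≥ 2. The subalgebra 𝔫 = ⁅𝔪,𝔪⁆ is a Lie ideal of sp(2n,k), and the quotient Lie algebra q := sp(2n,k)/𝔫 is a Heisenberg Lie algebra: it has dimension 2n + 1, its derived subalgebra ⁅q,q⁆ equals its center {x ∈ q : ⁅x,y⁆ = 0 for all y ∈ q}, and this center is one-dimensional. -/

import Mathlib

-- Preamble shared by the symplectic-Lie-algebra statements.
open Matrix

noncomputable section

/-- The matrix of the standard symplectic form: `[[0, Iₙ], [−Iₙ, 0]]`. -/
def spJ (k : Type*) [Field k] (n : ℕ) :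
    Matrix (Fin n ⊕ Fin n) (Fin n ⊕ Fin n) k :=
  Matrix.fromBlocks 0 1 (-1) 0

/-- The symplectic Lie algebra `sp(2n,k) = {x : xᵀJ + Jx = 0}`, as a subset of the
matrix Lie algebra (with bracket `⁅x,y⁆ = x*y - y*x`). -/
def spSet (k : Type*) [Field k] (n : ℕ) :
    Set (Matrix (Fin n ⊕ Fin n) (Fin n ⊕ Fin n) k) :=
  {x | xᵀ * spJ k n + spJ k n * x = 0}

/-- The symplectic group `Sp(2n,k) = {g : gᵀJg = J}`. -/
def SpGroup (k : Type*) [Field k] (n : ℕ) :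
    Set (Matrix (Fin n ⊕ Fin n) (Fin n ⊕ Fin n) k) :=
  {g | gᵀ * spJ k n * g = spJ k n}

/-- The derived subalgebra `𝔪 = ⁅sp(2n,k), sp(2n,k)⁆`, i.e. the span of all brackets of
pairs of elements of `sp(2n,k)`. -/
def spm (k : Type*) [Field k] (n : ℕ) :
    Submodule k (Matrix (Fin n ⊕ Fin n) (Fin n ⊕ Fin n) k) :=
  Submodule.span k {m | ∃ x ∈ spSet k n, ∃ y ∈ spSet k n, m = x * y - y * x}

/-- The second derived subalgebra `𝔫 = ⁅𝔪, 𝔪⁆`. -/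
def spn (k : Type*) [Field k] (n : ℕ) :
    Submodule k (Matrix (Fin n ⊕ Fin n) (Fin n ⊕ Fin n) k) :=
  Submodule.span k {m | ∃ x ∈ spm k n, ∃ y ∈ spm k n, m = x * y - y * x}

/-- The center `{x ∈ sp(2n,k) : ⁅x,y⁆ = 0 for all y ∈ sp(2n,k)}`. -/
def spCenter (k : Type*) [Field k] (n : ℕ) :
    Set (Matrix (Fin n ⊕ Fin n) (Fin n ⊕ Fin n) k) :=
  {x ∈ spSet k n | ∀ y ∈ spSet k n, x * y - y * x = 0}

section HeisenbergAux

open Submodule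

set_option linter.unusedSectionVars false

variable {k : Type*} [Field k] {n : ℕ}

/-! ### Characteristic two helpers -/

lemma mneg [CharP k 2] {I J : Type*} (X : Matrix I J k) : -X = X := by
  ext i j; exact CharTwo.neg_eq _

lemma msub [CharP k 2] {I J : Type*} (X Y : Matrix I J k) : X - Y = X + Y := by
  rw [sub_eq_add_neg, mneg]

lemma msub_comm [CharP k 2] {I J : Type*} (X Y : Matrix I J k) : X - Y = Y - X := by
  rw [msub, msub, add_comm]

lemma madd_eq_zero_iff [CharP k 2] {I J : Type*} (X Y : Matrix I J k) : X + Y = 0 ↔ X = Y := by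
  rw [← msub, sub_eq_zero]

lemma ite_pair {α : Type*} {x y : α} {P Q : Prop} [Decidable P] [Decidable Q]
    (h : P ↔ Q) : (if P then x else y) = (if Q then x else y) := by
  by_cases hp : P
  · rw [if_pos hp, if_pos (h.mp hp)]
  · rw [if_neg hp, if_neg (fun hq => hp (h.mpr hq))]

lemma and_self_iff' (P : Prop) : P ∧ P ↔ P := ⟨fun h => h.1, fun h => ⟨h, h⟩⟩

/-! ### Standard basis matrices -/

/-- Standard basis matrix with a `1` entry. -/
def sbm (i j : Fin n) : Matrix (Fin n) (Fin n) k := Matrix.single i j 1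

lemma sbm_apply (i j p q : Fin n) :
    (sbm (k := k) i j) p q = if i = p ∧ j = q then 1 else 0 := rfl

lemma sbm_transpose (i j : Fin n) : (sbm (k := k) i j)ᵀ = sbm j i := by
  ext p q
  simp only [Matrix.transpose_apply, sbm_apply]
  exact if_congr and_comm rfl rfl

lemma sbm_mul_same (i j l : Fin n) : (sbm (k := k) i j) * sbm j l = sbm i l := by
  have := Matrix.single_mul_single_same (α := k) (c := 1) (i := i) (j := j) (k := l) (d := 1)
  simpa [sbm] using this

lemma sbm_mul_of_ne {j l : Fin n} (h : j ≠ l) (i m : Fin n) :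
    (sbm (k := k) i j) * sbm l m = 0 :=
  Matrix.single_mul_single_of_ne (c := 1) (i := i) (j := j) (k := l) (h := h) (d := 1)

lemma sbm_add_self [CharP k 2] (i j : Fin n) : (sbm (k := k) i j) + sbm i j = 0 := by
  rw [madd_eq_zero_iff]

lemma trace_sbm (i : Fin n) : (sbm (k := k) i i).trace = 1 := by
  classical
  unfold Matrix.trace
  rw [Finset.sum_eq_single i]
  · simp [Matrix.diag, sbm_apply]
  · intro b _ hb; simp [Matrix.diag, sbm_apply, Ne.symm hb]
  · simp

lemma trace_mul_sbm (b : Matrix (Fin n) (Fin n) k) (i : Fin n) :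
    (b * sbm i i).trace = b i i := by
  classical
  unfold Matrix.trace
  rw [Finset.sum_eq_single i]
  · simp [Matrix.diag, sbm]
  · intro p _ hp
    simp [Matrix.diag, sbm, Matrix.mul_single_apply_of_ne (hbj := hp)]
  · simp

lemma symm_apply {b : Matrix (Fin n) (Fin n) k} (h : bᵀ = b) (p q : Fin n) :
    b p q = b q p := by
  nth_rewrite 1 [← h]; rfl

/-- Trace of product of a symmetric, zero-diagonal matrix with a symmetric matrix
vanishes in characteristic two. -/
lemma trace_alt_symm [CharP k 2] {b c : Matrix (Fin n) (Fin n) k} (hb : bᵀ = b)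
    (hb0 : ∀ i, b i i = 0) (hc : cᵀ = c) : (b * c).trace = 0 := by
  classical
  unfold Matrix.trace
  simp only [Matrix.diag, Matrix.mul_apply]
  rw [← Finset.sum_product']
  apply Finset.sum_involution (fun p _ => (p.2, p.1))
  · intro p _
    simp only
    rw [symm_apply hb p.2 p.1, symm_apply hc p.1 p.2]
    rw [← two_mul, ← mul_assoc]
    have h2 : (2 : k) = 0 := by exact_mod_cast CharP.cast_eq_zero k 2
    rw [h2, zero_mul, zero_mul]
  · intro p _ hf
    intro hp
    apply hf
    have h1 : p.2 = p.1 := congrArg Prod.fst hp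
    rw [← h1, hb0, zero_mul]
  · intro p _; exact Finset.mem_univ _
  · intro p _; rfl

/-! ### The block pieces -/

/-- `haM a = [[a,0],[0,aᵀ]]`. -/
def haM (a : Matrix (Fin n) (Fin n) k) :
    Matrix (Fin n ⊕ Fin n) (Fin n ⊕ Fin n) k :=
  Matrix.fromBlocks a 0 0 aᵀ

/-- `ubM b = [[0,b],[0,0]]`. -/
def ubM (b : Matrix (Fin n) (Fin n) k) :
    Matrix (Fin n ⊕ Fin n) (Fin n ⊕ Fin n) k :=
  Matrix.fromBlocks 0 b 0 0

/-- `lcM c = [[0,0],[c,0]]`. -/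
def lcM (c : Matrix (Fin n) (Fin n) k) :
    Matrix (Fin n ⊕ Fin n) (Fin n ⊕ Fin n) k :=
  Matrix.fromBlocks 0 0 c 0

lemma fromBlocks_sub {A B C D A' B' C' D' : Matrix (Fin n) (Fin n) k} :
    Matrix.fromBlocks A B C D - Matrix.fromBlocks A' B' C' D' =
      Matrix.fromBlocks (A - A') (B - B') (C - C') (D - D') := by
  ext (i | i) (j | j) <;> simp

/-- `haM` as a linear map. -/
def haL : Matrix (Fin n) (Fin n) k →ₗ[k]
    Matrix (Fin n ⊕ Fin n) (Fin n ⊕ Fin n) k where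
  toFun := haM
  map_add' a b := by ext (i | i) (j | j) <;> simp [haM]
  map_smul' c a := by ext (i | i) (j | j) <;> simp [haM]

/-- `ubM` as a linear map. -/
def ubL : Matrix (Fin n) (Fin n) k →ₗ[k]
    Matrix (Fin n ⊕ Fin n) (Fin n ⊕ Fin n) k where
  toFun := ubM
  map_add' a b := by ext (i | i) (j | j) <;> simp [ubM]
  map_smul' c a := by ext (i | i) (j | j) <;> simp [ubM]

/-- `lcM` as a linear map. -/
def lcL : Matrix (Fin n) (Fin n) k →ₗ[k]
    Matrix (Fin n ⊕ Fin n) (Fin n ⊕ Fin n) k where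
  toFun := lcM
  map_add' a b := by ext (i | i) (j | j) <;> simp [lcM]
  map_smul' c a := by ext (i | i) (j | j) <;> simp [lcM]

lemma haL_apply (a : Matrix (Fin n) (Fin n) k) : haL a = haM a := rfl
lemma ubL_apply (a : Matrix (Fin n) (Fin n) k) : ubL a = ubM a := rfl
lemma lcL_apply (a : Matrix (Fin n) (Fin n) k) : lcL a = lcM a := rfl

end HeisenbergAux
section HeisenbergAux2

open Submodule

set_option linter.unusedSectionVars false

variable {k : Type*} [Field k] {n : ℕ}

@[simp] lemma toB11_add (x y : Matrix (Fin n ⊕ Fin n) (Fin n ⊕ Fin n) k) :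
    (x + y).toBlocks₁₁ = x.toBlocks₁₁ + y.toBlocks₁₁ := rfl
@[simp] lemma toB12_add (x y : Matrix (Fin n ⊕ Fin n) (Fin n ⊕ Fin n) k) :
    (x + y).toBlocks₁₂ = x.toBlocks₁₂ + y.toBlocks₁₂ := rfl
@[simp] lemma toB21_add (x y : Matrix (Fin n ⊕ Fin n) (Fin n ⊕ Fin n) k) :
    (x + y).toBlocks₂₁ = x.toBlocks₂₁ + y.toBlocks₂₁ := rfl
@[simp] lemma toB22_add (x y : Matrix (Fin n ⊕ Fin n) (Fin n ⊕ Fin n) k) :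
    (x + y).toBlocks₂₂ = x.toBlocks₂₂ + y.toBlocks₂₂ := rfl
@[simp] lemma toB11_smul (c : k) (x : Matrix (Fin n ⊕ Fin n) (Fin n ⊕ Fin n) k) :
    (c • x).toBlocks₁₁ = c • x.toBlocks₁₁ := rfl
@[simp] lemma toB12_smul (c : k) (x : Matrix (Fin n ⊕ Fin n) (Fin n ⊕ Fin n) k) :
    (c • x).toBlocks₁₂ = c • x.toBlocks₁₂ := rfl
@[simp] lemma toB21_smul (c : k) (x : Matrix (Fin n ⊕ Fin n) (Fin n ⊕ Fin n) k) :
    (c • x).toBlocks₂₁ = c • x.toBlocks₂₁ := rfl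
@[simp] lemma toB22_smul (c : k) (x : Matrix (Fin n ⊕ Fin n) (Fin n ⊕ Fin n) k) :
    (c • x).toBlocks₂₂ = c • x.toBlocks₂₂ := rfl
@[simp] lemma toB11_zero : (0 : Matrix (Fin n ⊕ Fin n) (Fin n ⊕ Fin n) k).toBlocks₁₁ = 0 := rfl
@[simp] lemma toB12_zero : (0 : Matrix (Fin n ⊕ Fin n) (Fin n ⊕ Fin n) k).toBlocks₁₂ = 0 := rfl
@[simp] lemma toB21_zero : (0 : Matrix (Fin n ⊕ Fin n) (Fin n ⊕ Fin n) k).toBlocks₂₁ = 0 := rfl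
@[simp] lemma toB22_zero : (0 : Matrix (Fin n ⊕ Fin n) (Fin n ⊕ Fin n) k).toBlocks₂₂ = 0 := rfl

/-- The symplectic condition subspace: `B,C` symmetric and `D = Aᵀ`. -/
def Ssub (k : Type*) [Field k] (n : ℕ) :
    Submodule k (Matrix (Fin n ⊕ Fin n) (Fin n ⊕ Fin n) k) where
  carrier := {x | x.toBlocks₁₂ᵀ = x.toBlocks₁₂ ∧ x.toBlocks₂₁ᵀ = x.toBlocks₂₁ ∧
    x.toBlocks₂₂ = x.toBlocks₁₁ᵀ}
  add_mem' := by
    rintro x y ⟨a1, a2, a3⟩ ⟨b1, b2, b3⟩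
    refine ⟨?_, ?_, ?_⟩ <;>
      simp [Matrix.transpose_add, a1, a2, a3, b1, b2, b3]
  zero_mem' := by refine ⟨?_, ?_, ?_⟩ <;> simp
  smul_mem' := by
    rintro c x ⟨a1, a2, a3⟩
    refine ⟨?_, ?_, ?_⟩ <;> simp [Matrix.transpose_smul, a1, a2, a3]

/-- Alternating: symmetric with zero diagonal. -/
def altP (b : Matrix (Fin n) (Fin n) k) : Prop := bᵀ = b ∧ ∀ i, b i i = 0

lemma altP_add {b c : Matrix (Fin n) (Fin n) k} (hb : altP b) (hc : altP c) :
    altP (b + c) := by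
  refine ⟨by simp [Matrix.transpose_add, hb.1, hc.1], fun i => ?_⟩
  simp [hb.2 i, hc.2 i]

lemma altP_smul {b : Matrix (Fin n) (Fin n) k} (c : k) (hb : altP b) :
    altP (c • b) := by
  refine ⟨by simp [Matrix.transpose_smul, hb.1], fun i => ?_⟩
  simp [hb.2 i]

lemma altP_zero : altP (0 : Matrix (Fin n) (Fin n) k) := ⟨by simp, fun i => rfl⟩

/-- The subspace corresponding to `𝔪`: `B,C` alternating, `D = Aᵀ`. -/
def Msub (k : Type*) [Field k] (n : ℕ) :
    Submodule k (Matrix (Fin n ⊕ Fin n) (Fin n ⊕ Fin n) k) where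
  carrier := {x | altP x.toBlocks₁₂ ∧ altP x.toBlocks₂₁ ∧ x.toBlocks₂₂ = x.toBlocks₁₁ᵀ}
  add_mem' := by
    rintro x y ⟨a1, a2, a3⟩ ⟨b1, b2, b3⟩
    exact ⟨by simpa using altP_add a1 b1, by simpa using altP_add a2 b2,
      by simp [a3, b3, Matrix.transpose_add]⟩
  zero_mem' := ⟨by simpa using altP_zero, by simpa using altP_zero, by simp⟩
  smul_mem' := by
    rintro c x ⟨a1, a2, a3⟩
    exact ⟨by simpa using altP_smul c a1, by simpa using altP_smul c a2,
      by simp [a3, Matrix.transpose_smul]⟩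

/-- The subspace corresponding to `𝔫`: `B,C` alternating, `D = Aᵀ`, `tr A = 0`. -/
def Nsub (k : Type*) [Field k] (n : ℕ) :
    Submodule k (Matrix (Fin n ⊕ Fin n) (Fin n ⊕ Fin n) k) where
  carrier := {x | altP x.toBlocks₁₂ ∧ altP x.toBlocks₂₁ ∧
    x.toBlocks₂₂ = x.toBlocks₁₁ᵀ ∧ x.toBlocks₁₁.trace = 0}
  add_mem' := by
    rintro x y ⟨a1, a2, a3, a4⟩ ⟨b1, b2, b3, b4⟩
    exact ⟨by simpa using altP_add a1 b1, by simpa using altP_add a2 b2,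
      by simp [a3, b3, Matrix.transpose_add], by simp [Matrix.trace_add, a4, b4]⟩
  zero_mem' := ⟨by simpa using altP_zero, by simpa using altP_zero, by simp, by simp⟩
  smul_mem' := by
    rintro c x ⟨a1, a2, a3, a4⟩
    exact ⟨by simpa using altP_smul c a1, by simpa using altP_smul c a2,
      by simp [a3, Matrix.transpose_smul], by simp [Matrix.trace_smul, a4]⟩

lemma Nsub_le_Msub : Nsub k n ≤ Msub k n := fun x hx => ⟨hx.1, hx.2.1, hx.2.2.1⟩

lemma Msub_le_Ssub : Msub k n ≤ Ssub k n := fun x hx => ⟨hx.1.1, hx.2.1.1, hx.2.2⟩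

/-! ### Identification of `spSet` with `Ssub` -/

lemma fromBlocks_mem_spSet_iff [CharP k 2] {A B C D : Matrix (Fin n) (Fin n) k} :
    Matrix.fromBlocks A B C D ∈ spSet k n ↔ (Bᵀ = B ∧ Cᵀ = C ∧ D = Aᵀ) := by
  show _ = _ ↔ _
  rw [show spJ k n = Matrix.fromBlocks 0 1 (-1) 0 from rfl]
  rw [Matrix.fromBlocks_transpose, Matrix.fromBlocks_multiply, Matrix.fromBlocks_multiply,
    ← Matrix.fromBlocks_zero (n := Fin n) (m := Fin n) (l := Fin n) (o := Fin n) (α := k)]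
  simp only [Matrix.mul_zero, Matrix.zero_mul, Matrix.mul_one, Matrix.one_mul,
    Matrix.mul_neg, Matrix.neg_mul, zero_add, add_zero, Matrix.fromBlocks_add,
    Matrix.fromBlocks_inj, mneg]
  constructor
  · rintro ⟨h1, h2, h3, h4⟩
    rw [madd_eq_zero_iff] at h1 h2 h3 h4
    exact ⟨h4, h1, h2.symm⟩
  · rintro ⟨h1, h2, h3⟩
    refine ⟨?_, ?_, ?_, ?_⟩ <;> rw [madd_eq_zero_iff]
    · exact h2
    · exact h3.symm
    · rw [h3, Matrix.transpose_transpose]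
    · exact h1

lemma mem_spSet_iff [CharP k 2] {x : Matrix (Fin n ⊕ Fin n) (Fin n ⊕ Fin n) k} :
    x ∈ spSet k n ↔ x ∈ Ssub k n := by
  conv_lhs => rw [← Matrix.fromBlocks_toBlocks x]
  rw [fromBlocks_mem_spSet_iff]
  exact Iff.rfl

lemma coe_Ssub [CharP k 2] : (Ssub k n : Set (Matrix (Fin n ⊕ Fin n) (Fin n ⊕ Fin n) k)) = spSet k n := by
  ext x; exact mem_spSet_iff.symm

/-- Decomposition of an element of `Ssub` into its three pieces. -/
lemma decompS {x : Matrix (Fin n ⊕ Fin n) (Fin n ⊕ Fin n) k}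
    (h : x.toBlocks₂₂ = x.toBlocks₁₁ᵀ) :
    x = haM x.toBlocks₁₁ + ubM x.toBlocks₁₂ + lcM x.toBlocks₂₁ := by
  conv_lhs => rw [← Matrix.fromBlocks_toBlocks x, h]
  ext (i | i) (j | j) <;> simp [haM, ubM, lcM]

end HeisenbergAux2
section HeisenbergAux3

open Submodule

set_option linter.unusedSectionVars false

variable {k : Type*} [Field k] {n : ℕ}

/-! ### Bracket computations at the block level -/

lemma br_ub_lc [CharP k 2] (b c : Matrix (Fin n) (Fin n) k) :
    ubM b * lcM c - lcM c * ubM b = Matrix.fromBlocks (b * c) 0 0 (c * b) := by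
  unfold ubM lcM
  rw [Matrix.fromBlocks_multiply, Matrix.fromBlocks_multiply, fromBlocks_sub,
    Matrix.fromBlocks_inj]
  refine ⟨by simp, by simp, by simp, by simp [mneg]⟩

lemma br_ha_ub (a b : Matrix (Fin n) (Fin n) k) :
    haM a * ubM b - ubM b * haM a = ubM (a * b - b * aᵀ) := by
  unfold haM ubM
  rw [Matrix.fromBlocks_multiply, Matrix.fromBlocks_multiply, fromBlocks_sub,
    Matrix.fromBlocks_inj]
  refine ⟨by simp, by simp, by simp, by simp⟩

lemma br_ha_lc (a c : Matrix (Fin n) (Fin n) k) :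
    haM a * lcM c - lcM c * haM a = lcM (aᵀ * c - c * a) := by
  unfold haM lcM
  rw [Matrix.fromBlocks_multiply, Matrix.fromBlocks_multiply, fromBlocks_sub,
    Matrix.fromBlocks_inj]
  refine ⟨by simp, by simp, by simp, by simp⟩

lemma br_ha_ha [CharP k 2] (a a' : Matrix (Fin n) (Fin n) k) :
    haM a * haM a' - haM a' * haM a = haM (a * a' - a' * a) := by
  unfold haM
  rw [Matrix.fromBlocks_multiply, Matrix.fromBlocks_multiply, fromBlocks_sub,
    Matrix.fromBlocks_inj]
  refine ⟨by simp, by simp, by simp, ?_⟩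
  simp only [Matrix.mul_zero, Matrix.zero_mul, add_zero, zero_add, zero_sub, sub_zero,
    Matrix.transpose_sub, Matrix.transpose_mul]
  exact msub_comm _ _

/-! ### The two key block computations -/

lemma L1' [CharP k 2] {A B C A' B' C' : Matrix (Fin n) (Fin n) k}
    (hB : Bᵀ = B) (hC : Cᵀ = C) (hB' : B'ᵀ = B') (hC' : C'ᵀ = C') :
    Matrix.fromBlocks A B C Aᵀ * Matrix.fromBlocks A' B' C' A'ᵀ -
      Matrix.fromBlocks A' B' C' A'ᵀ * Matrix.fromBlocks A B C Aᵀ ∈ Msub k n := by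
  rw [Matrix.fromBlocks_multiply, Matrix.fromBlocks_multiply, fromBlocks_sub]
  refine ⟨⟨?_, ?_⟩, ⟨?_, ?_⟩, ?_⟩
  · show ((A * B' + B * A'ᵀ) - (A' * B + B' * Aᵀ))ᵀ = _
    simp only [Matrix.toBlocks_fromBlocks₁₂, msub, Matrix.transpose_add, Matrix.transpose_mul,
      Matrix.transpose_transpose, hB, hB']
    abel
  · show ∀ i, ((A * B' + B * A'ᵀ) - (A' * B + B' * Aᵀ)) i i = 0
    intro i
    simp only [Matrix.sub_apply, Matrix.add_apply, Matrix.mul_apply, Matrix.transpose_apply]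
    rw [← Finset.sum_add_distrib, ← Finset.sum_add_distrib, ← Finset.sum_sub_distrib]
    apply Finset.sum_eq_zero
    intro j _
    rw [symm_apply hB' j i, symm_apply hB j i]
    ring
  · show ((C * A' + Aᵀ * C') - (C' * A + A'ᵀ * C))ᵀ = _
    simp only [Matrix.toBlocks_fromBlocks₂₁, msub, Matrix.transpose_add, Matrix.transpose_mul,
      Matrix.transpose_transpose, hC, hC']
    abel
  · show ∀ i, ((C * A' + Aᵀ * C') - (C' * A + A'ᵀ * C)) i i = 0
    intro i
    simp only [Matrix.sub_apply, Matrix.add_apply, Matrix.mul_apply, Matrix.transpose_apply]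
    rw [← Finset.sum_add_distrib, ← Finset.sum_add_distrib, ← Finset.sum_sub_distrib]
    apply Finset.sum_eq_zero
    intro j _
    rw [symm_apply hC' i j, symm_apply hC i j]
    ring
  · show (C * B' + Aᵀ * A'ᵀ) - (C' * B + A'ᵀ * Aᵀ) = ((A * A' + B * C') - (A' * A + B' * C))ᵀ
    simp only [msub, Matrix.transpose_add, Matrix.transpose_mul,
      Matrix.transpose_transpose, hB, hB', hC, hC']
    abel

lemma L2' [CharP k 2] {A B C A' B' C' : Matrix (Fin n) (Fin n) k}
    (hB : altP B) (hC : altP C) (hB' : B'ᵀ = B') (hC' : C'ᵀ = C') :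
    Matrix.fromBlocks A B C Aᵀ * Matrix.fromBlocks A' B' C' A'ᵀ -
      Matrix.fromBlocks A' B' C' A'ᵀ * Matrix.fromBlocks A B C Aᵀ ∈ Nsub k n := by
  have h1 := L1' (n := n) (A := A) (A' := A') hB.1 hC.1 hB' hC'
  rw [Matrix.fromBlocks_multiply, Matrix.fromBlocks_multiply, fromBlocks_sub] at h1 ⊢
  refine ⟨h1.1, h1.2.1, h1.2.2, ?_⟩
  show ((A * A' + B * C') - (A' * A + B' * C)).trace = 0
  rw [Matrix.trace_sub, Matrix.trace_add, Matrix.trace_add,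
    trace_alt_symm hB.1 hB.2 hC', Matrix.trace_mul_comm B' C,
    trace_alt_symm hC.1 hC.2 hB', Matrix.trace_mul_comm A A']
  ring

lemma bracket_mem_Msub [CharP k 2] {x y : Matrix (Fin n ⊕ Fin n) (Fin n ⊕ Fin n) k}
    (hx : x ∈ Ssub k n) (hy : y ∈ Ssub k n) : x * y - y * x ∈ Msub k n := by
  obtain ⟨hxB, hxC, hxD⟩ := hx
  obtain ⟨hyB, hyC, hyD⟩ := hy
  rw [← Matrix.fromBlocks_toBlocks x, ← Matrix.fromBlocks_toBlocks y, hxD, hyD]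
  exact L1' hxB hxC hyB hyC

lemma bracket_mem_Nsub [CharP k 2] {x y : Matrix (Fin n ⊕ Fin n) (Fin n ⊕ Fin n) k}
    (hx : x ∈ Msub k n) (hy : y ∈ Ssub k n) : x * y - y * x ∈ Nsub k n := by
  obtain ⟨hxB, hxC, hxD⟩ := hx
  obtain ⟨hyB, hyC, hyD⟩ := hy
  rw [← Matrix.fromBlocks_toBlocks x, ← Matrix.fromBlocks_toBlocks y, hxD, hyD]
  exact L2' hxB hxC hyB hyC

/-! ### Membership of the pieces in `Ssub` -/

lemma haM_mem_Ssub (a : Matrix (Fin n) (Fin n) k) : haM a ∈ Ssub k n :=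
  ⟨by simp [haM], by simp [haM], by simp [haM]⟩

lemma ubM_mem_Ssub {b : Matrix (Fin n) (Fin n) k} (hb : bᵀ = b) : ubM b ∈ Ssub k n :=
  ⟨by simpa [ubM] using hb, by simp [ubM], by simp [ubM]⟩

lemma lcM_mem_Ssub {c : Matrix (Fin n) (Fin n) k} (hc : cᵀ = c) : lcM c ∈ Ssub k n :=
  ⟨by simp [lcM], by simpa [lcM] using hc, by simp [lcM]⟩

lemma sbm_symm (i j : Fin n) : (sbm (k := k) i j + sbm j i)ᵀ = sbm i j + sbm j i := by
  rw [Matrix.transpose_add, sbm_transpose, sbm_transpose, add_comm]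

/-! ### Generators of `spm` -/

lemma ha_sbm_mem_spm [CharP k 2] (i j : Fin n) : haM (sbm (k := k) i j) ∈ spm k n := by
  rcases eq_or_ne i j with rfl | hij
  · apply subset_span
    refine ⟨ubM (sbm i i), mem_spSet_iff.mpr (ubM_mem_Ssub (sbm_transpose i i)),
      lcM (sbm i i), mem_spSet_iff.mpr (lcM_mem_Ssub (sbm_transpose i i)), ?_⟩
    rw [br_ub_lc, sbm_mul_same]
    unfold haM
    rw [sbm_transpose]
  · apply subset_span
    refine ⟨ubM (sbm i i), mem_spSet_iff.mpr (ubM_mem_Ssub (sbm_transpose i i)),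
      lcM (sbm i j + sbm j i), mem_spSet_iff.mpr (lcM_mem_Ssub (sbm_symm i j)), ?_⟩
    rw [br_ub_lc]
    simp only [Matrix.mul_add, Matrix.add_mul, sbm_mul_same, sbm_mul_of_ne hij,
      sbm_mul_of_ne hij.symm, add_zero, zero_add]
    unfold haM
    rw [sbm_transpose]

end HeisenbergAux3
section HeisenbergAux3b

open Submodule

set_option linter.unusedSectionVars false

variable {k : Type*} [Field k] {n : ℕ}

lemma ubM_zero : ubM (0 : Matrix (Fin n) (Fin n) k) = 0 := by
  unfold ubM; rw [Matrix.fromBlocks_zero]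

lemma lcM_zero : lcM (0 : Matrix (Fin n) (Fin n) k) = 0 := by
  unfold lcM; rw [Matrix.fromBlocks_zero]

lemma ub_gen_mem_spm [CharP k 2] (i j : Fin n) :
    ubM (sbm (k := k) i j + sbm j i) ∈ spm k n := by
  rcases eq_or_ne i j with rfl | hij
  · rw [sbm_add_self, ubM_zero]; exact zero_mem _
  · apply subset_span
    refine ⟨haM (sbm i i), mem_spSet_iff.mpr (haM_mem_Ssub _),
      ubM (sbm i j + sbm j i), mem_spSet_iff.mpr (ubM_mem_Ssub (sbm_symm i j)), ?_⟩
    rw [br_ha_ub, sbm_transpose]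
    congr 1
    rw [msub]
    simp only [Matrix.mul_add, Matrix.add_mul, sbm_mul_same, sbm_mul_of_ne hij,
      sbm_mul_of_ne hij.symm, add_zero, zero_add]

lemma lc_gen_mem_spm [CharP k 2] (i j : Fin n) :
    lcM (sbm (k := k) i j + sbm j i) ∈ spm k n := by
  rcases eq_or_ne i j with rfl | hij
  · rw [sbm_add_self, lcM_zero]; exact zero_mem _
  · apply subset_span
    refine ⟨haM (sbm i i), mem_spSet_iff.mpr (haM_mem_Ssub _),
      lcM (sbm i j + sbm j i), mem_spSet_iff.mpr (lcM_mem_Ssub (sbm_symm i j)), ?_⟩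
    rw [br_ha_lc, sbm_transpose]
    congr 1
    rw [msub]
    simp only [Matrix.mul_add, Matrix.add_mul, sbm_mul_same, sbm_mul_of_ne hij,
      sbm_mul_of_ne hij.symm, add_zero, zero_add]

/-! ### Generators of `spn` -/

lemma ha_sbm_ne_mem_spn [CharP k 2] {i j : Fin n} (hij : i ≠ j) :
    haM (sbm (k := k) i j) ∈ spn k n := by
  apply subset_span
  refine ⟨haM (sbm i i), ha_sbm_mem_spm i i, haM (sbm i j), ha_sbm_mem_spm i j, ?_⟩
  rw [br_ha_ha, sbm_mul_same, sbm_mul_of_ne hij.symm, sub_zero]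

lemma ha_diag_mem_spn [CharP k 2] (i0 i : Fin n) :
    haM (sbm (k := k) i i + sbm i0 i0) ∈ spn k n := by
  apply subset_span
  refine ⟨haM (sbm i i0), ha_sbm_mem_spm i i0, haM (sbm i0 i), ha_sbm_mem_spm i0 i, ?_⟩
  rw [br_ha_ha, sbm_mul_same, sbm_mul_same, msub]

lemma ub_gen_mem_spn [CharP k 2] (i j : Fin n) :
    ubM (sbm (k := k) i j + sbm j i) ∈ spn k n := by
  rcases eq_or_ne i j with rfl | hij
  · rw [sbm_add_self, ubM_zero]; exact zero_mem _
  · apply subset_span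
    refine ⟨haM (sbm i i), ha_sbm_mem_spm i i,
      ubM (sbm i j + sbm j i), ub_gen_mem_spm i j, ?_⟩
    rw [br_ha_ub, sbm_transpose]
    congr 1
    rw [msub]
    simp only [Matrix.mul_add, Matrix.add_mul, sbm_mul_same, sbm_mul_of_ne hij,
      sbm_mul_of_ne hij.symm, add_zero, zero_add]

lemma lc_gen_mem_spn [CharP k 2] (i j : Fin n) :
    lcM (sbm (k := k) i j + sbm j i) ∈ spn k n := by
  rcases eq_or_ne i j with rfl | hij
  · rw [sbm_add_self, lcM_zero]; exact zero_mem _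
  · apply subset_span
    refine ⟨haM (sbm i i), ha_sbm_mem_spm i i,
      lcM (sbm i j + sbm j i), lc_gen_mem_spm i j, ?_⟩
    rw [br_ha_lc, sbm_transpose]
    congr 1
    rw [msub]
    simp only [Matrix.mul_add, Matrix.add_mul, sbm_mul_same, sbm_mul_of_ne hij,
      sbm_mul_of_ne hij.symm, add_zero, zero_add]

/-! ### Span lemmas for `n × n` matrices -/

lemma prod_cond_eq (i j : Fin n) (p : Fin n × Fin n) :
    (p.1 = i ∧ p.2 = j) = (p = (i, j)) := by
  apply propext
  constructor
  · rintro ⟨h1, h2⟩; exact Prod.ext h1 h2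
  · rintro rfl; exact ⟨rfl, rfl⟩

lemma prod_cond_eq' (i j : Fin n) (p : Fin n × Fin n) :
    (p.2 = i ∧ p.1 = j) = (p = (j, i)) := by
  rw [← prod_cond_eq]
  exact propext and_comm

lemma mem_span_all (a : Matrix (Fin n) (Fin n) k) :
    a ∈ span k {m : Matrix (Fin n) (Fin n) k | ∃ i j, m = sbm i j} := by
  rw [Matrix.matrix_eq_sum_single a]
  apply Submodule.sum_mem
  intro i _
  apply Submodule.sum_mem
  intro j _
  have h : Matrix.single i j (a i j) = a i j • sbm i j := by
    simp [sbm]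
  rw [h]
  exact smul_mem _ _ (subset_span ⟨i, j, rfl⟩)

lemma mem_span_alt [CharP k 2] {b : Matrix (Fin n) (Fin n) k} (hb : altP b) :
    b ∈ span k {m : Matrix (Fin n) (Fin n) k | ∃ i j, m = sbm i j + sbm j i} := by
  classical
  have hrep : b = ∑ p : Fin n × Fin n,
      (if p.1 < p.2 then b p.1 p.2 else 0) • (sbm p.1 p.2 + sbm p.2 p.1) := by
    ext i j
    rw [Matrix.sum_apply]
    have hterm : ∀ p : Fin n × Fin n,
        (((if p.1 < p.2 then b p.1 p.2 else 0) • (sbm (k := k) p.1 p.2 + sbm p.2 p.1) :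
            Matrix (Fin n) (Fin n) k)) i j
        = (if p = (i, j) then (if p.1 < p.2 then b p.1 p.2 else 0) else 0)
          + (if p = (j, i) then (if p.1 < p.2 then b p.1 p.2 else 0) else 0) := by
      intro p
      simp only [Matrix.smul_apply, Matrix.add_apply, sbm_apply, smul_eq_mul, mul_add,
        mul_ite, mul_one, mul_zero, prod_cond_eq, prod_cond_eq']
    rw [Finset.sum_congr rfl (fun p _ => hterm p), Finset.sum_add_distrib,
      Finset.sum_ite_eq' Finset.univ (i, j), Finset.sum_ite_eq' Finset.univ (j, i)]
    rw [if_pos (Finset.mem_univ (i, j)), if_pos (Finset.mem_univ (j, i))]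
    rcases lt_trichotomy i j with h | h | h
    · simp [h, (not_lt.mpr h.le : ¬ j < i)]
    · subst h
      simp [hb.2 i]
    · simp [h, (not_lt.mpr h.le : ¬ i < j), symm_apply hb.1 i j]
  rw [hrep]
  apply Submodule.sum_mem
  intro p _
  exact smul_mem _ _ (subset_span ⟨p.1, p.2, rfl⟩)

lemma mem_span_traceless [CharP k 2] (i0 : Fin n) {a : Matrix (Fin n) (Fin n) k}
    (ha : a.trace = 0) :
    a ∈ span k {m : Matrix (Fin n) (Fin n) k |
      (∃ i j, i ≠ j ∧ m = sbm i j) ∨ ∃ i, m = sbm i i + sbm i0 i0} := by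
  classical
  have ha' : ∑ l, a l l = 0 := by simpa [Matrix.trace, Matrix.diag] using ha
  have hrep : a = (∑ p : Fin n × Fin n, (if p.1 ≠ p.2 then a p.1 p.2 else 0) • sbm p.1 p.2)
      + ∑ i, a i i • (sbm i i + sbm i0 i0) := by
    ext i j
    rw [Matrix.add_apply, Matrix.sum_apply, Matrix.sum_apply]
    have hterm1 : ∀ p : Fin n × Fin n,
        (((if p.1 ≠ p.2 then a p.1 p.2 else 0) • sbm (k := k) p.1 p.2 :
            Matrix (Fin n) (Fin n) k)) i j
        = (if p = (i, j) then (if p.1 ≠ p.2 then a p.1 p.2 else 0) else 0) := by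
      intro p
      simp only [Matrix.smul_apply, sbm_apply, smul_eq_mul, mul_ite, mul_one, mul_zero,
        prod_cond_eq]
    have hterm2 : ∀ l : Fin n,
        ((a l l • (sbm (k := k) l l + sbm i0 i0) : Matrix (Fin n) (Fin n) k)) i j
        = (if l = i ∧ l = j then a l l else 0) + (if i0 = i ∧ i0 = j then a l l else 0) := by
      intro l
      simp only [Matrix.smul_apply, Matrix.add_apply, sbm_apply, smul_eq_mul, mul_add,
        mul_ite, mul_one, mul_zero]
    rw [Finset.sum_congr rfl (fun p _ => hterm1 p),
      Finset.sum_ite_eq' Finset.univ (i, j),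
      Finset.sum_congr rfl (fun l _ => hterm2 l), Finset.sum_add_distrib,
      if_pos (Finset.mem_univ (i, j))]
    have h1 : ∑ l, (if l = i ∧ l = j then a l l else 0) = (if i = j then a i i else 0) := by
      by_cases hij : i = j
      · subst hij
        have hcond : ∀ l : Fin n, (if l = i ∧ l = i then a l l else 0 : k)
            = (if l = i then a l l else 0) := by
          intro l
          by_cases hl : l = i
          · rw [if_pos ⟨hl, hl⟩, if_pos hl]
          · rw [if_neg (by tauto), if_neg hl]
        rw [if_pos rfl, Finset.sum_congr rfl (fun l _ => hcond l),
          Finset.sum_ite_eq' Finset.univ i (fun l => a l l), if_pos (Finset.mem_univ i)]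
      · rw [if_neg hij]
        exact Finset.sum_eq_zero fun l _ => by
          rw [if_neg (by rintro ⟨rfl, rfl⟩; exact hij rfl)]
    have h2 : ∑ l, (if i0 = i ∧ i0 = j then a l l else 0) = 0 := by
      by_cases h0 : i0 = i ∧ i0 = j
      · rw [Finset.sum_congr rfl (fun l _ => if_pos h0)]
        exact ha'
      · rw [Finset.sum_congr rfl (fun l _ => if_neg h0)]
        simp
    rw [h1, h2]
    by_cases hij : i = j
    · subst hij
      simp
    · simp [hij]
  rw [hrep]
  apply Submodule.add_mem
  · apply Submodule.sum_mem
    intro p _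
    rcases eq_or_ne p.1 p.2 with h | h
    · rw [if_neg (by simpa using h)]
      rw [zero_smul]
      exact zero_mem _
    · exact smul_mem _ _ (subset_span (Or.inl ⟨p.1, p.2, h, rfl⟩))
  · apply Submodule.sum_mem
    intro l _
    exact smul_mem _ _ (subset_span (Or.inr ⟨l, rfl⟩))

end HeisenbergAux3b
section HeisenbergAux4

open Submodule

set_option linter.unusedSectionVars false

variable {k : Type*} [Field k] {n : ℕ}

/-! ### Lifted membership lemmas -/

lemma haM_mem_spm [CharP k 2] (a : Matrix (Fin n) (Fin n) k) : haM a ∈ spm k n := by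
  have h : haL a ∈ Submodule.map haL
      (span k {m : Matrix (Fin n) (Fin n) k | ∃ i j, m = sbm i j}) :=
    mem_map_of_mem (mem_span_all a)
  rw [Submodule.map_span] at h
  refine Submodule.span_le.mpr ?_ h
  rintro _ ⟨m, ⟨i, j, rfl⟩, rfl⟩
  exact ha_sbm_mem_spm i j

lemma ubM_alt_mem_spn [CharP k 2] {b : Matrix (Fin n) (Fin n) k} (hb : altP b) :
    ubM b ∈ spn k n := by
  have h : ubL b ∈ Submodule.map ubL
      (span k {m : Matrix (Fin n) (Fin n) k | ∃ i j, m = sbm i j + sbm j i}) :=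
    mem_map_of_mem (mem_span_alt hb)
  rw [Submodule.map_span] at h
  refine Submodule.span_le.mpr ?_ h
  rintro _ ⟨m, ⟨i, j, rfl⟩, rfl⟩
  exact ub_gen_mem_spn i j

lemma lcM_alt_mem_spn [CharP k 2] {c : Matrix (Fin n) (Fin n) k} (hc : altP c) :
    lcM c ∈ spn k n := by
  have h : lcL c ∈ Submodule.map lcL
      (span k {m : Matrix (Fin n) (Fin n) k | ∃ i j, m = sbm i j + sbm j i}) :=
    mem_map_of_mem (mem_span_alt hc)
  rw [Submodule.map_span] at h
  refine Submodule.span_le.mpr ?_ h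
  rintro _ ⟨m, ⟨i, j, rfl⟩, rfl⟩
  exact lc_gen_mem_spn i j

lemma haM_traceless_mem_spn [CharP k 2] (i0 : Fin n) {a : Matrix (Fin n) (Fin n) k}
    (ha : a.trace = 0) : haM a ∈ spn k n := by
  have h : haL a ∈ Submodule.map haL
      (span k {m : Matrix (Fin n) (Fin n) k |
        (∃ i j, i ≠ j ∧ m = sbm i j) ∨ ∃ i, m = sbm i i + sbm i0 i0}) :=
    mem_map_of_mem (mem_span_traceless i0 ha)
  rw [Submodule.map_span] at h
  refine Submodule.span_le.mpr ?_ h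
  rintro _ ⟨m, hm, rfl⟩
  rcases hm with ⟨i, j, hij, rfl⟩ | ⟨i, rfl⟩
  · exact ha_sbm_ne_mem_spn hij
  · exact ha_diag_mem_spn i0 i

/-! ### Structural inclusions -/

lemma spm_le_Msub [CharP k 2] : spm k n ≤ Msub k n := by
  apply Submodule.span_le.mpr
  rintro _ ⟨x, hx, y, hy, rfl⟩
  exact bracket_mem_Msub (mem_spSet_iff.mp hx) (mem_spSet_iff.mp hy)

lemma spn_le_Nsub [CharP k 2] : spn k n ≤ Nsub k n := by
  apply Submodule.span_le.mpr
  rintro _ ⟨x, hx, y, hy, rfl⟩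
  exact bracket_mem_Nsub (spm_le_Msub hx) (Msub_le_Ssub (spm_le_Msub hy))

lemma spn_le_spm [CharP k 2] : spn k n ≤ spm k n := by
  apply Submodule.span_le.mpr
  rintro _ ⟨x, hx, y, hy, rfl⟩
  exact subset_span ⟨x, mem_spSet_iff.mpr (Msub_le_Ssub (spm_le_Msub hx)), y,
    mem_spSet_iff.mpr (Msub_le_Ssub (spm_le_Msub hy)), rfl⟩

lemma Nsub_le_spn [CharP k 2] (i0 : Fin n) : Nsub k n ≤ spn k n := by
  rintro x ⟨hB, hC, hD, ht⟩
  rw [decompS hD]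
  exact add_mem (add_mem (haM_traceless_mem_spn i0 ht) (ubM_alt_mem_spn hB))
    (lcM_alt_mem_spn hC)

lemma spn_eq_Nsub [CharP k 2] (i0 : Fin n) : spn k n = Nsub k n :=
  le_antisymm spn_le_Nsub (Nsub_le_spn i0)

lemma Msub_le_spm [CharP k 2] : Msub k n ≤ spm k n := by
  rintro x ⟨hB, hC, hD⟩
  rw [decompS hD]
  exact add_mem (add_mem (haM_mem_spm _) (spn_le_spm (ubM_alt_mem_spn hB)))
    (spn_le_spm (lcM_alt_mem_spn hC))

lemma spm_eq_Msub [CharP k 2] : spm k n = Msub k n :=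
  le_antisymm spm_le_Msub Msub_le_spm

/-! ### The complement `W` inside `Ssub` -/

/-- A (2n+1)-element family spanning a complement of `𝔫` in `sp(2n)`. -/
def wfam (i0 : Fin n) : Unit ⊕ Fin n ⊕ Fin n →
    Matrix (Fin n ⊕ Fin n) (Fin n ⊕ Fin n) k :=
  Sum.elim (fun _ => haM (sbm i0 i0))
    (Sum.elim (fun i => ubM (sbm i i)) (fun i => lcM (sbm i i)))

lemma wfam_eval (i0 : Fin n) (c : Unit ⊕ Fin n ⊕ Fin n → k) :
    (∀ i, (∑ u, c u • wfam (k := k) i0 u) (Sum.inl i) (Sum.inr i) = c (Sum.inr (Sum.inl i)))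
    ∧ (∀ i, (∑ u, c u • wfam (k := k) i0 u) (Sum.inr i) (Sum.inl i) = c (Sum.inr (Sum.inr i)))
    ∧ (∑ u, c u • wfam (k := k) i0 u).toBlocks₁₁.trace = c (Sum.inl ()) := by
  classical
  have key : ∀ (p q : Fin n ⊕ Fin n), (∑ u, c u • wfam (k := k) i0 u) p q
      = c (Sum.inl ()) * haM (sbm i0 i0) p q
        + ((∑ i, c (Sum.inr (Sum.inl i)) * ubM (sbm i i) p q)
          + ∑ i, c (Sum.inr (Sum.inr i)) * lcM (sbm i i) p q) := by
    intro p q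
    rw [Matrix.sum_apply, Fintype.sum_sum_type, Fintype.sum_sum_type]
    simp only [wfam, Sum.elim_inl, Sum.elim_inr, Matrix.smul_apply, smul_eq_mul]
    rw [Fintype.sum_unique]
  refine ⟨?_, ?_, ?_⟩
  · intro i
    rw [key]
    simp only [haM, ubM, lcM, Matrix.fromBlocks_apply₁₂, Matrix.zero_apply, mul_zero,
      sbm_apply, Finset.sum_const_zero, add_zero, zero_add, mul_ite, mul_one]
    rw [Finset.sum_congr rfl (fun l _ => ite_pair (and_self_iff' _)),
      Finset.sum_ite_eq' Finset.univ i, if_pos (Finset.mem_univ i)]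
  · intro i
    rw [key]
    simp only [haM, ubM, lcM, Matrix.fromBlocks_apply₂₁, Matrix.zero_apply, mul_zero,
      sbm_apply, Finset.sum_const_zero, add_zero, zero_add, mul_ite, mul_one]
    rw [Finset.sum_congr rfl (fun l _ => ite_pair (and_self_iff' _)),
      Finset.sum_ite_eq' Finset.univ i, if_pos (Finset.mem_univ i)]
  · have hdiag : ∀ i : Fin n, (∑ u, c u • wfam (k := k) i0 u) (Sum.inl i) (Sum.inl i)
        = (if i0 = i then c (Sum.inl ()) else 0) := by
      intro i
      rw [key]
      simp only [haM, ubM, lcM, Matrix.fromBlocks_apply₁₁, Matrix.zero_apply, mul_zero,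
        sbm_apply, Finset.sum_const_zero, add_zero, mul_ite, mul_one]
      rw [ite_pair (and_self_iff' _)]
    show ∑ i, (∑ u, c u • wfam (k := k) i0 u) (Sum.inl i) (Sum.inl i) = _
    rw [Finset.sum_congr rfl (fun i _ => hdiag i), Finset.sum_ite_eq Finset.univ i0,
      if_pos (Finset.mem_univ i0)]

/-- The span of the `wfam` family. -/
def Wsub (i0 : Fin n) : Submodule k (Matrix (Fin n ⊕ Fin n) (Fin n ⊕ Fin n) k) :=
  span k (Set.range (wfam i0))

lemma wfam_indep (i0 : Fin n) : LinearIndependent k (wfam (k := k) i0) := by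
  rw [Fintype.linearIndependent_iff]
  intro c hc u
  obtain ⟨e1, e2, e3⟩ := wfam_eval i0 c
  rcases u with u | i | i
  · rcases u
    rw [← e3, hc]
    simp
  · rw [← e1 i, hc]
    simp
  · rw [← e2 i, hc]
    simp

lemma W_le_Ssub (i0 : Fin n) : Wsub (k := k) i0 ≤ Ssub k n := by
  apply Submodule.span_le.mpr
  rintro _ ⟨u, rfl⟩
  rcases u with u | i | i
  · exact haM_mem_Ssub _
  · exact ubM_mem_Ssub (sbm_transpose i i)
  · exact lcM_mem_Ssub (sbm_transpose i i)

lemma Nsub_inf_W (i0 : Fin n) : Nsub k n ⊓ Wsub (k := k) i0 = ⊥ := by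
  rw [eq_bot_iff]
  rintro x ⟨hN, hW⟩
  obtain ⟨c, hc⟩ := (mem_span_range_iff_exists_fun k).mp hW
  obtain ⟨e1, e2, e3⟩ := wfam_eval i0 c
  have hz : ∀ u, c u = 0 := by
    intro u
    rcases u with u | i | i
    · rcases u
      rw [← e3, hc]
      exact hN.2.2.2
    · rw [← e1 i, hc]
      exact hN.1.2 i
    · rw [← e2 i, hc]
      exact hN.2.1.2 i
  have : x = 0 := by
    rw [← hc]
    exact Finset.sum_eq_zero fun u _ => by rw [hz u, zero_smul]
  simp [this]

/-! ### Diagonal sums -/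

lemma diag_sum_apply (f : Fin n → k) (p q : Fin n) :
    (∑ l, f l • sbm (k := k) l l) p q = if p = q then f p else 0 := by
  classical
  rw [Matrix.sum_apply]
  by_cases h : p = q
  · subst h
    rw [if_pos rfl, Finset.sum_congr rfl (fun l _ => by
      rw [Matrix.smul_apply, sbm_apply, smul_eq_mul, mul_ite, mul_one, mul_zero,
        ite_pair (and_self_iff' _)]),
      Finset.sum_ite_eq' Finset.univ p f, if_pos (Finset.mem_univ p)]
  · rw [if_neg h]
    apply Finset.sum_eq_zero
    intro l _
    rw [Matrix.smul_apply, sbm_apply, smul_eq_mul,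
      if_neg (by rintro ⟨rfl, rfl⟩; exact h rfl), mul_zero]

lemma diag_sum_altP {b : Matrix (Fin n) (Fin n) k} (hb : bᵀ = b) :
    altP (b - ∑ l, b l l • sbm (k := k) l l) := by
  constructor
  · rw [Matrix.transpose_sub, hb]
    congr 1
    ext p q
    rw [Matrix.transpose_apply, diag_sum_apply, diag_sum_apply]
    by_cases h : p = q
    · subst h; rfl
    · rw [if_neg h, if_neg (Ne.symm h)]
  · intro i
    rw [Matrix.sub_apply, diag_sum_apply, if_pos rfl, sub_self]

lemma traceless_shift [CharP k 2] (i0 : Fin n) (a : Matrix (Fin n) (Fin n) k) :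
    (a - a.trace • sbm (k := k) i0 i0).trace = 0 := by
  rw [Matrix.trace_sub, Matrix.trace_smul, trace_sbm, smul_eq_mul, mul_one, sub_self]

end HeisenbergAux4
section HeisenbergAux5

open Submodule

set_option linter.unusedSectionVars false

variable {k : Type*} [Field k] {n : ℕ}

lemma haM_split [CharP k 2] (i0 : Fin n) (a : Matrix (Fin n) (Fin n) k) :
    haM a = haM (a - a.trace • sbm i0 i0) + a.trace • haM (sbm i0 i0) := by
  have h : a = (a - a.trace • sbm i0 i0) + a.trace • sbm i0 i0 := by abel
  conv_lhs => rw [h]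
  rw [← haL_apply, map_add, _root_.map_smul, haL_apply, haL_apply]

lemma ubM_diag_sum (f : Fin n → k) :
    ubM (∑ l, f l • sbm (k := k) l l) = ∑ l, f l • ubM (sbm l l) := by
  rw [← ubL_apply, map_sum]
  simp only [_root_.map_smul, ubL_apply]

lemma lcM_diag_sum (f : Fin n → k) :
    lcM (∑ l, f l • sbm (k := k) l l) = ∑ l, f l • lcM (sbm l l) := by
  rw [← lcL_apply, map_sum]
  simp only [_root_.map_smul, lcL_apply]

lemma ubM_split (b : Matrix (Fin n) (Fin n) k) :
    ubM b = ubM (b - ∑ l, b l l • sbm l l) + ∑ l, b l l • ubM (sbm l l) := by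
  have h : b = (b - ∑ l, b l l • sbm l l) + ∑ l, b l l • sbm l l := by abel
  conv_lhs => rw [h]
  rw [← ubL_apply, map_add, ubL_apply, ubL_apply, ubM_diag_sum]

lemma lcM_split (c : Matrix (Fin n) (Fin n) k) :
    lcM c = lcM (c - ∑ l, c l l • sbm l l) + ∑ l, c l l • lcM (sbm l l) := by
  have h : c = (c - ∑ l, c l l • sbm l l) + ∑ l, c l l • sbm l l := by abel
  conv_lhs => rw [h]
  rw [← lcL_apply, map_add, lcL_apply, lcL_apply, lcM_diag_sum]

lemma Ssub_le_sup [CharP k 2] (i0 : Fin n) :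
    Ssub k n ≤ spn k n ⊔ Wsub (k := k) i0 := by
  rintro x ⟨hB, hC, hD⟩
  rw [decompS hD]
  refine add_mem (add_mem ?_ ?_) ?_
  · rw [haM_split i0]
    refine add_mem (Submodule.mem_sup_left
      (haM_traceless_mem_spn i0 (traceless_shift i0 _))) ?_
    exact Submodule.mem_sup_right (smul_mem _ _ (subset_span ⟨Sum.inl (), rfl⟩))
  · rw [ubM_split]
    refine add_mem (Submodule.mem_sup_left (ubM_alt_mem_spn (diag_sum_altP hB))) ?_
    exact Submodule.mem_sup_right (sum_mem fun l _ =>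
      smul_mem _ _ (subset_span ⟨Sum.inr (Sum.inl l), rfl⟩))
  · rw [lcM_split]
    refine add_mem (Submodule.mem_sup_left (lcM_alt_mem_spn (diag_sum_altP hC))) ?_
    exact Submodule.mem_sup_right (sum_mem fun l _ =>
      smul_mem _ _ (subset_span ⟨Sum.inr (Sum.inr l), rfl⟩))

lemma sup_W_eq [CharP k 2] (i0 : Fin n) :
    spn k n ⊔ Wsub (k := k) i0 = Ssub k n :=
  le_antisymm
    (sup_le (fun x hx => Msub_le_Ssub (Nsub_le_Msub (spn_le_Nsub hx))) (W_le_Ssub i0))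
    (Ssub_le_sup i0)

set_option maxHeartbeats 1000000 in
lemma finrank_W (i0 : Fin n) :
    Module.finrank k (Wsub (k := k) i0) = 2 * n + 1 := by
  have h := finrank_span_eq_card (R := k) (wfam_indep (k := k) (n := n) i0)
  rw [show Wsub (k := k) i0 = Submodule.span k (Set.range (wfam i0)) from rfl, h]
  simp only [Fintype.card_sum, Fintype.card_unit, Fintype.card_fin]
  omega

lemma finrank_Ssub [CharP k 2] (i0 : Fin n) :
    Module.finrank k (Ssub k n) = Module.finrank k (spn k n) + (2 * n + 1) := by
  have h := Submodule.finrank_sup_add_finrank_inf_eq (spn k n) (Wsub (k := k) i0)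
  have hb : spn k n ⊓ Wsub (k := k) i0 = ⊥ := by
    rw [eq_bot_iff]
    intro x hx
    have hx' : x ∈ Nsub k n ⊓ Wsub (k := k) i0 := ⟨spn_le_Nsub hx.1, hx.2⟩
    rw [Nsub_inf_W i0] at hx'
    exact hx'
  rw [sup_W_eq i0, hb, finrank_bot, add_zero, finrank_W i0] at h
  exact h

lemma haM_sbm_ne_zero (i0 : Fin n) : haM (sbm (k := k) i0 i0) ≠ 0 := by
  intro h
  have h2 := congrFun (congrFun h (Sum.inl i0)) (Sum.inl i0)
  simp [haM, sbm_apply] at h2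

lemma spm_sup_Z [CharP k 2] (i0 : Fin n) :
    spn k n ⊔ span k {haM (sbm (k := k) i0 i0)} = spm k n := by
  refine le_antisymm (sup_le spn_le_spm (span_le.mpr ?_)) ?_
  · intro x hx
    rw [Set.mem_singleton_iff] at hx
    subst hx
    exact ha_sbm_mem_spm i0 i0
  · intro x hxm
    obtain ⟨hB, hC, hD⟩ := spm_le_Msub hxm
    rw [decompS hD]
    refine add_mem (add_mem ?_ ?_) ?_
    · rw [haM_split i0 x.toBlocks₁₁]
      refine add_mem (Submodule.mem_sup_left
        (haM_traceless_mem_spn i0 (traceless_shift i0 x.toBlocks₁₁))) ?_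
      exact Submodule.mem_sup_right (smul_mem _ _
        (Submodule.mem_span_singleton_self (haM (sbm (k := k) i0 i0))))
    · exact Submodule.mem_sup_left (ubM_alt_mem_spn hB)
    · exact Submodule.mem_sup_left (lcM_alt_mem_spn hC)

lemma finrank_spm [CharP k 2] (i0 : Fin n) :
    Module.finrank k (spm k n) = Module.finrank k (spn k n) + 1 := by
  have h := Submodule.finrank_sup_add_finrank_inf_eq (spn k n)
    (span k {haM (sbm (k := k) i0 i0)})
  have hb : spn k n ⊓ span k {haM (sbm (k := k) i0 i0)} = ⊥ := by
    rw [eq_bot_iff]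
    rintro x ⟨hx1, hx2⟩
    obtain ⟨t, rfl⟩ := mem_span_singleton.mp hx2
    have hN := spn_le_Nsub hx1
    have htr := hN.2.2.2
    rw [toB11_smul] at htr
    have hblock : (haM (sbm (k := k) i0 i0)).toBlocks₁₁ = sbm i0 i0 := rfl
    rw [hblock, Matrix.trace_smul, trace_sbm, smul_eq_mul, mul_one] at htr
    rw [htr, zero_smul]
    exact zero_mem _
  rw [spm_sup_Z i0, hb, finrank_bot, add_zero,
    finrank_span_singleton (haM_sbm_ne_zero i0)] at h
  exact h

lemma block11_br_lc (x : Matrix (Fin n ⊕ Fin n) (Fin n ⊕ Fin n) k)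
    (c : Matrix (Fin n) (Fin n) k) :
    (x * lcM c - lcM c * x).toBlocks₁₁ = x.toBlocks₁₂ * c := by
  conv_lhs => rw [← Matrix.fromBlocks_toBlocks x]
  unfold lcM
  rw [Matrix.fromBlocks_multiply, Matrix.fromBlocks_multiply, fromBlocks_sub]
  simp

lemma block11_br_ub (x : Matrix (Fin n ⊕ Fin n) (Fin n ⊕ Fin n) k)
    (b : Matrix (Fin n) (Fin n) k) :
    (ubM b * x - x * ubM b).toBlocks₁₁ = b * x.toBlocks₂₁ := by
  conv_lhs => rw [← Matrix.fromBlocks_toBlocks x]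
  unfold ubM
  rw [Matrix.fromBlocks_multiply, Matrix.fromBlocks_multiply, fromBlocks_sub]
  simp

end HeisenbergAux5
/-- Let `k` be algebraically closed of characteristic 2 and `n ≥ 2`. Then `𝔫 = ⁅𝔪,𝔪⁆`
is a Lie ideal of `sp(2n,k)`, and the quotient `q = sp(2n,k)/𝔫` is a Heisenberg Lie
algebra: `q` has dimension `2n + 1`; the derived subalgebra `⁅q,q⁆` equals the center of
`q` (expressed here via preimages in `sp(2n,k)`: for `x ∈ sp(2n,k)`, the image of `x`
lies in `⁅q,q⁆` iff `x ∈ 𝔪 + 𝔫`, and it is central in `q` iff all brackets `⁅x,y⁆` with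
`y ∈ sp(2n,k)` lie in `𝔫`); and this center is one-dimensional. -/
theorem stmt14 (k : Type*) [Field k] [IsAlgClosed k] [CharP k 2] (n : ℕ) (hn : 2 ≤ n) :
    (∀ x ∈ spSet k n, ∀ y ∈ spn k n, x * y - y * x ∈ spn k n) ∧
    (∃ S : Submodule k (Matrix (Fin n ⊕ Fin n) (Fin n ⊕ Fin n) k),
      (S : Set (Matrix (Fin n ⊕ Fin n) (Fin n ⊕ Fin n) k)) = spSet k n ∧
      Module.finrank k S = Module.finrank k (spn k n) + (2 * n + 1)) ∧
    (∀ x ∈ spSet k n,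
      (x ∈ spm k n ⊔ spn k n ↔ ∀ y ∈ spSet k n, x * y - y * x ∈ spn k n)) ∧
    Module.finrank k ↥(spm k n ⊔ spn k n) = Module.finrank k (spn k n) + 1 := by
  have i0 : Fin n := ⟨0, by omega⟩
  refine ⟨?_, ⟨Ssub k n, coe_Ssub, finrank_Ssub i0⟩, ?_, ?_⟩
  · intro x hx y hy
    have h2 : y * x - x * y ∈ Nsub k n :=
      bracket_mem_Nsub (Nsub_le_Msub (spn_le_Nsub hy)) (mem_spSet_iff.mp hx)
    have h3 : x * y - y * x ∈ Nsub k n := by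
      have h4 := (Nsub k n).neg_mem h2
      rwa [neg_sub] at h4
    exact Nsub_le_spn i0 h3
  · intro x hx
    constructor
    · intro hm y hy
      rw [sup_eq_left.mpr spn_le_spm] at hm
      exact Nsub_le_spn i0 (bracket_mem_Nsub (spm_le_Msub hm) (mem_spSet_iff.mp hy))
    · intro h
      obtain ⟨hB, hC, hD⟩ := mem_spSet_iff.mp hx
      have diagB : ∀ i, x.toBlocks₁₂ i i = 0 := by
        intro i
        have h1 := spn_le_Nsub (h (lcM (sbm i i))
          (mem_spSet_iff.mpr (lcM_mem_Ssub (sbm_transpose i i))))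
        have h2 := h1.2.2.2
        rw [block11_br_lc, trace_mul_sbm] at h2
        exact h2
      have diagC : ∀ i, x.toBlocks₂₁ i i = 0 := by
        intro i
        have h1 := spn_le_Nsub (h (ubM (sbm i i))
          (mem_spSet_iff.mpr (ubM_mem_Ssub (sbm_transpose i i))))
        have h1' := (Nsub k n).neg_mem h1
        rw [neg_sub] at h1'
        have h2 := h1'.2.2.2
        rw [block11_br_ub, Matrix.trace_mul_comm, trace_mul_sbm] at h2
        exact h2
      exact Submodule.mem_sup_left (Msub_le_spm ⟨⟨hB, diagB⟩, ⟨hC, diagC⟩, hD⟩)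
  · rw [sup_eq_left.mpr spn_le_spm]
    exact finrank_spm i0
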